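/- arXiv:2305.05637 — 3 statements merged into one kernel-verified Lean document; each statement's English description precedes it below -/
import Mathlib

section
/- Let a, b, c ∈ 𝕋² be pairs and suppose that b is signed. If a ⪯ b and b ⪯ c, then a ⪯ c. (Restricted transitivity of the relation ⪯ on the symmetrized tropical semiring.) -/
/-- The tropical (max-plus) semiring 𝕋 = ℝ ∪ {−∞}, modeled as `WithBot ℝ`. -/
abbrev Trop : Type := WithBot ℝ

/-- A pair (a⁺, a⁻) ∈ 𝕋² is signed if a⁺ = −∞ or a⁻ = −∞. -/
def SignedPair (a : Trop × Trop) : Prop := a.1 = ⊥ ∨ a.2 = ⊥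

/-- The order relation ⪯ on pairs: (a⁺,a⁻) ⪯ (b⁺,b⁻) iff max(a⁺,b⁻) ≤ max(a⁻,b⁺). -/
def ple (a b : Trop × Trop) : Prop := max a.1 b.2 ≤ max a.2 b.1

/-- Restricted transitivity of ⪯ on the symmetrized tropical semiring:
if a ⪯ b, b ⪯ c and b is signed, then a ⪯ c. -/
theorem restricted_transitivity (a b c : Trop × Trop)
    (hb : SignedPair b) (hab : ple a b) (hbc : ple b c) : ple a c := by
  unfold ple SignedPair at *
  rcases hb with h | h
  · -- b.1 = ⊥ : hab gives a.1 ≤ a.2 and b.2 ≤ a.2; hbc gives c.2 ≤ max b.2 c.1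
    rw [h, max_bot_right] at hab
    rw [h, max_bot_left] at hbc
    rw [max_le_iff] at hab
    apply max_le
    · exact hab.1.trans (le_max_left _ _)
    · exact hbc.trans (max_le (hab.2.trans (le_max_left _ _)) (le_max_right _ _))
  · -- b.2 = ⊥ : hab gives a.1 ≤ max a.2 b.1; hbc gives b.1 ≤ c.1 and c.2 ≤ c.1
    rw [h, max_bot_right] at hab
    rw [h, max_bot_left] at hbc
    rw [max_le_iff] at hbc
    apply max_le
    · exact hab.trans (max_le (le_max_left _ _) (hbc.1.trans (le_max_right _ _)))
    · exact hbc.2.trans (le_max_right _ _)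
end

section
/- Let C ⊆ (𝕋ⁿ)² be a closed monotone pre-congruence and let C^∨ denote the set of signed pairs belonging to C. Then: (i) f ∈ C implies f^∨ ∈ C; (ii) C^⊲ = (C^∨)^⊲; (iii) C = C^∨ ⊕ Δⁿ, i.e., C equals the set of all pairs (g⁺ ⊕ c, g⁻ ⊕ c) with (g⁺,g⁻) ∈ C^∨ and c ∈ 𝕋ⁿ (⊕ denoting componentwise max). -/
/-- The map 𝕋 → ℝ, x ↦ eˣ (with e^{−∞} = 0), inducing the metric
d(x,y) = |eˣ − e^y| on 𝕋. -/
noncomputable def tropExp : Trop → ℝ := WithBot.recBotCoe (0 : ℝ) Real.exp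

/-- The topology on 𝕋 induced by the metric d(x,y) = |eˣ − e^y|. -/
noncomputable instance : TopologicalSpace Trop :=
  TopologicalSpace.induced tropExp inferInstance

open Filter

/-- A pair of vectors (x⁺, x⁻) ∈ (𝕋ⁿ)² is signed if, for every coordinate i,
x⁺_i = −∞ or x⁻_i = −∞. -/
def SignedVecPair {n : ℕ} (x : (Fin n → Trop) × (Fin n → Trop)) : Prop :=
  ∀ i, x.1 i = ⊥ ∨ x.2 i = ⊥

/-- Tropical scalar product of vectors: ⟨x,y⟩ = max_i (x_i + y_i). -/
noncomputable def tdot {n : ℕ} (x y : Fin n → Trop) : Trop :=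
  Finset.univ.sup fun i => x i + y i

/-- The "signed part" f^∨ of a pair of vectors f = (f⁺, f⁻):
f^{∨+}_i = f⁺_i if f⁺_i ≥ f⁻_i and −∞ otherwise;
f^{∨−}_i = f⁻_i if f⁻_i > f⁺_i and −∞ otherwise. -/
noncomputable def vee {n : ℕ} (f : (Fin n → Trop) × (Fin n → Trop)) :
    (Fin n → Trop) × (Fin n → Trop) :=
  (fun i => if f.2 i ≤ f.1 i then f.1 i else ⊥,
   fun i => if f.1 i < f.2 i then f.2 i else ⊥)

/-- Tropical scalar action: (λ ⊙ f)_i = λ + f_i. -/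
noncomputable def tsmul {n : ℕ} (l : Trop) (f : Fin n → Trop) : Fin n → Trop :=
  fun i => l + f i

/-- A monotone pre-congruence C ⊆ (𝕋ⁿ)²: stable by tropical scalar multiplication,
by componentwise max, by "transitivity" (f⁻ = g⁺ implies (f⁺,g⁻) ∈ C), and containing
every pair (f⁺,f⁻) with f⁺ ≥ f⁻. -/
structure IsMonotonePrecongruence {n : ℕ} (C : Set ((Fin n → Trop) × (Fin n → Trop))) : Prop where
  smul_mem : ∀ f ∈ C, ∀ l : Trop, (tsmul l f.1, tsmul l f.2) ∈ C
  add_mem : ∀ f ∈ C, ∀ g ∈ C, (f.1 ⊔ g.1, f.2 ⊔ g.2) ∈ C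
  trans_mem : ∀ f ∈ C, ∀ g ∈ C, f.2 = g.1 → (f.1, g.2) ∈ C
  monotone_mem : ∀ f : (Fin n → Trop) × (Fin n → Trop), f.2 ≤ f.1 → f ∈ C

/-- The pair x ⊕_i y = (x⁺ ⊕ y⁺_{∖i}, x⁻_{∖i} ⊕ y⁻), where z_{∖i} is z with
coordinate i replaced by −∞. -/
noncomputable def oplusI {n : ℕ} (i : Fin n)
    (x y : (Fin n → Trop) × (Fin n → Trop)) : (Fin n → Trop) × (Fin n → Trop) :=
  (x.1 ⊔ Function.update y.1 i ⊥, Function.update x.2 i ⊥ ⊔ y.2)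

/-- A signed bend cone R ⊆ (𝕋ⁿ)²: all elements are signed pairs, R contains all
pairs (x⁺, −∞), is stable by tropical scalar multiplication, and is stable under
the operations x, y ↦ (x ⊕ y)^∨ and x, y ↦ (x ⊕_i y)^∨ (the latter when x⁻_i = y⁺_i). -/
structure IsSignedBendCone {n : ℕ} (R : Set ((Fin n → Trop) × (Fin n → Trop))) : Prop where
  signed : ∀ x ∈ R, SignedVecPair x
  pos_mem : ∀ xp : Fin n → Trop, (xp, fun _ => (⊥ : Trop)) ∈ R
  smul_mem : ∀ x ∈ R, ∀ l : Trop, (tsmul l x.1, tsmul l x.2) ∈ R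
  add_vee_mem : ∀ x ∈ R, ∀ y ∈ R, vee (x.1 ⊔ y.1, x.2 ⊔ y.2) ∈ R
  addI_vee_mem : ∀ x ∈ R, ∀ y ∈ R, ∀ i : Fin n, x.2 i = y.1 i → vee (oplusI i x y) ∈ R

/-- The one-sided polar B^⊲ = {a ∈ 𝕋ⁿ : ⟨x⁺,a⟩ ≥ ⟨x⁻,a⟩ for all (x⁺,x⁻) ∈ B}. -/
def onePolar {n : ℕ} (B : Set ((Fin n → Trop) × (Fin n → Trop))) : Set (Fin n → Trop) :=
  {a | ∀ x ∈ B, tdot x.2 a ≤ tdot x.1 a}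

/-- The signed part C^∨ of a set C ⊆ (𝕋ⁿ)²: the signed pairs belonging to C. -/
def signedPart {n : ℕ} (C : Set ((Fin n → Trop) × (Fin n → Trop))) :
    Set ((Fin n → Trop) × (Fin n → Trop)) :=
  {x ∈ C | SignedVecPair x}

/-- The signed polar A° of A ⊆ 𝕋ⁿ : the set of signed pairs (x⁺,x⁻) with
⟨x⁺,a⟩ ≥ ⟨x⁻,a⟩ for all a ∈ A. -/
def signedPolar {n : ℕ} (A : Set (Fin n → Trop)) :
    Set ((Fin n → Trop) × (Fin n → Trop)) :=
  {x | SignedVecPair x ∧ ∀ a ∈ A, tdot x.2 a ≤ tdot x.1 a}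


lemma trop_add_max (r : ℝ) (x y : Trop) : (r:Trop) + (x ⊔ y) = ((r:Trop)+x) ⊔ ((r:Trop)+y) := by
  induction x using WithBot.recBotCoe with
  | bot => simp
  | coe a =>
    induction y using WithBot.recBotCoe with
    | bot => simp
    | coe b =>
      rcases le_total a b with h | h
      · rw [sup_eq_right.2 (WithBot.coe_le_coe.2 h), sup_eq_right.2]
        exact add_le_add_right (WithBot.coe_le_coe.2 h) _
      · rw [sup_eq_left.2 (WithBot.coe_le_coe.2 h), sup_eq_left.2]
        exact add_le_add_right (WithBot.coe_le_coe.2 h) _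

lemma trop_neg_cancel (r : ℝ) (x : Trop) : ((-r : ℝ):Trop) + ((r:Trop) + x) = x := by
  induction x using WithBot.recBotCoe with
  | bot => simp
  | coe a => rw [← WithBot.coe_add, ← WithBot.coe_add]; norm_num

lemma trop_add_le_add_right {r s : ℝ} (h : r ≤ s) (x : Trop) : (r:Trop) + x ≤ (s:Trop) + x := by
  induction x using WithBot.recBotCoe with
  | bot => simp
  | coe a => rw [← WithBot.coe_add, ← WithBot.coe_add]; exact WithBot.coe_le_coe.2 (by linarith)

lemma trop_le_add_left {r : ℝ} (h : 0 ≤ r) (x : Trop) : x ≤ (r:Trop) + x := by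
  simpa using trop_add_le_add_right h x

lemma tropExp_bot : tropExp ⊥ = 0 := rfl
lemma tropExp_coe (a : ℝ) : tropExp a = Real.exp a := rfl

lemma trop_tendsto_bot {d : ℝ} (hd : 0 < d) (x : Trop) :
    Tendsto (fun K : ℕ => ((-((K:ℝ)*d) : ℝ) : Trop) + x) atTop (nhds ⊥) := by
  rw [nhds_induced, tendsto_comap_iff]
  induction x using WithBot.recBotCoe with
  | bot => exact tendsto_const_nhds.congr (fun K => by simp [Function.comp_apply])
  | coe a =>
    have : (fun K : ℕ => tropExp (((-((K:ℝ)*d) : ℝ) : Trop) + (a:Trop)))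
        = fun K : ℕ => Real.exp a * (Real.exp (-d))^K := by
      funext K
      rw [← WithBot.coe_add, tropExp_coe, ← Real.exp_nat_mul, ← Real.exp_add]
      ring_nf
    rw [tropExp_bot, Function.comp_def, this]
    simpa using (tendsto_pow_atTop_nhds_zero_of_lt_one (Real.exp_nonneg _)
      (Real.exp_lt_one_iff.mpr (by linarith))).const_mul (Real.exp a)

lemma exists_delta {n : ℕ} (F G : Fin n → Trop) :
    ∃ d : ℝ, 0 < d ∧ ∀ j, F j < G j → (d:Trop) + F j ≤ G j := by
  have h : ∀ j, ∃ d : ℝ, 0 < d ∧ (F j < G j → (d:Trop) + F j ≤ G j) := by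
    intro j
    by_cases hj : F j < G j
    · by_cases hbF : F j = ⊥
      · exact ⟨1, one_pos, fun _ => by rw [hbF]; simp⟩
      · obtain ⟨a, ha⟩ := WithBot.ne_bot_iff_exists.1 hbF
        have hbG : G j ≠ ⊥ := fun hG => not_lt_bot (hG ▸ hj)
        obtain ⟨b, hb⟩ := WithBot.ne_bot_iff_exists.1 hbG
        refine ⟨b - a, ?_, fun _ => ?_⟩
        · have : (a:Trop) < (b:Trop) := by rw [ha, hb]; exact hj
          have := WithBot.coe_lt_coe.1 this
          linarith
        · rw [← ha, ← WithBot.coe_add, ← hb]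
          norm_num
    · exact ⟨1, one_pos, fun h => absurd h hj⟩
  choose D hD0 hD using h
  rcases isEmpty_or_nonempty (Fin n) with he | he
  · exact ⟨1, one_pos, fun j => isEmptyElim j⟩
  · refine ⟨Finset.univ.inf' Finset.univ_nonempty D, ?_, fun j hj => ?_⟩
    · exact (Finset.lt_inf'_iff _).2 fun j _ => hD0 j
    · exact le_trans (trop_add_le_add_right (Finset.inf'_le D (Finset.mem_univ j)) _) (hD j hj)

lemma vee_mem {n : ℕ} (C : Set ((Fin n → Trop) × (Fin n → Trop)))
    (hC : IsMonotonePrecongruence C) (hclosed : IsClosed C) :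
    ∀ f ∈ C, vee f ∈ C := by
  intro f hf
  obtain ⟨d, hd0, hd⟩ := exists_delta f.1 f.2
  have key : ∀ K : ℕ,
      ((fun j => if f.2 j ≤ f.1 j then f.1 j else ((-((K:ℝ)*d) : ℝ) : Trop) + f.1 j),
       (fun j => if f.2 j ≤ f.1 j then f.1 j else f.2 j)) ∈ C := by
    intro K
    set v : Fin n → Trop := fun j => if f.2 j ≤ f.1 j then (((K:ℝ)*d : ℝ):Trop) + f.1 j else ⊥
      with hv
    have hvv : ((v, v) : (Fin n → Trop) × (Fin n → Trop)) ∈ C := hC.monotone_mem (v, v) le_rfl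
    have W : ∀ k : ℕ, k ≤ K →
        (f.1 ⊔ v, (fun j => (((k:ℝ)*d : ℝ):Trop) + f.2 j) ⊔ v) ∈ C := by
      intro k
      induction k with
      | zero =>
        intro _
        have h0 := hC.add_mem f hf (v,v) hvv
        have e : (fun j => ((((0:ℕ):ℝ)*d : ℝ):Trop) + f.2 j) = f.2 := by
          funext j; norm_num
        rw [e]; exact h0
      | succ k ih =>
        intro hk1
        have hWk := ih (Nat.le_of_succ_le hk1)
        have ha := hC.add_mem _ (hC.smul_mem f hf (((((k+1:ℕ)):ℝ)*d : ℝ):Trop)) (v,v) hvv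
        have hle : (tsmul (((((k+1:ℕ)):ℝ)*d : ℝ):Trop) f.1 ⊔ v)
            ≤ ((fun j => (((k:ℝ)*d : ℝ):Trop) + f.2 j) ⊔ v) := by
          intro j
          simp only [Pi.sup_apply, tsmul]
          by_cases hj : f.2 j ≤ f.1 j
          · refine sup_le (le_sup_of_le_right ?_) le_sup_right
            simp only [hv, if_pos hj]
            refine trop_add_le_add_right ?_ _
            have hkK : ((k:ℝ)+1) ≤ (K:ℝ) := by exact_mod_cast hk1
            push_cast
            nlinarith
          · simp only [hv, if_neg hj, sup_bot_eq]
            have h2 := hd j (lt_of_not_ge hj)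
            calc ((((k+1:ℕ):ℝ)*d : ℝ):Trop) + f.1 j
                = (((k:ℝ)*d : ℝ):Trop) + (((d:ℝ):Trop) + f.1 j) := by
                  have hr : ((k+1:ℕ):ℝ)*d = (k:ℝ)*d + d := by push_cast; ring
                  rw [hr, WithBot.coe_add, add_assoc]
              _ ≤ (((k:ℝ)*d : ℝ):Trop) + f.2 j := add_le_add_right h2 _
        have step1 := hC.trans_mem _ hWk _
          (hC.monotone_mem ((fun j => (((k:ℝ)*d : ℝ):Trop) + f.2 j) ⊔ v,
            tsmul (((((k+1:ℕ)):ℝ)*d : ℝ):Trop) f.1 ⊔ v) hle) rfl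
        have step2 := hC.trans_mem _ step1 _ ha rfl
        exact step2
    have hWK := W K le_rfl
    have hsh := hC.smul_mem _ hWK (((-((K:ℝ)*d)) : ℝ) : Trop)
    have e1 : tsmul (((-((K:ℝ)*d)) : ℝ) : Trop) ((f.1 ⊔ v))
        = fun j => if f.2 j ≤ f.1 j then f.1 j else ((-((K:ℝ)*d) : ℝ) : Trop) + f.1 j := by
      funext j
      simp only [tsmul, Pi.sup_apply, hv]
      by_cases hj : f.2 j ≤ f.1 j
      · simp only [if_pos hj]
        rw [sup_eq_right.2 (trop_le_add_left (by positivity) (f.1 j)), trop_neg_cancel]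
      · simp only [if_neg hj, sup_bot_eq]
    have e2 : tsmul (((-((K:ℝ)*d)) : ℝ) : Trop) ((fun j => (((K:ℝ)*d : ℝ):Trop) + f.2 j) ⊔ v)
        = fun j => if f.2 j ≤ f.1 j then f.1 j else f.2 j := by
      funext j
      simp only [tsmul, Pi.sup_apply, hv]
      by_cases hj : f.2 j ≤ f.1 j
      · simp only [if_pos hj]
        rw [← trop_add_max, trop_neg_cancel, sup_eq_right.2 hj]
      · simp only [if_neg hj, sup_bot_eq, trop_neg_cancel]
    rw [e1, e2] at hsh
    exact hsh
  have htt : Tendsto (fun K : ℕ =>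
      ((fun j => if f.2 j ≤ f.1 j then f.1 j else ((-((K:ℝ)*d) : ℝ) : Trop) + f.1 j),
       (fun j => if f.2 j ≤ f.1 j then f.1 j else f.2 j)))
      atTop (nhds ((fun j => if f.2 j ≤ f.1 j then f.1 j else (⊥:Trop)),
       (fun j => if f.2 j ≤ f.1 j then f.1 j else f.2 j))) := by
    refine Filter.Tendsto.prodMk_nhds ?_ tendsto_const_nhds
    refine tendsto_pi_nhds.2 fun j => ?_
    by_cases hj : f.2 j ≤ f.1 j
    · simp only [if_pos hj]; exact tendsto_const_nhds
    · simp only [if_neg hj]; exact trop_tendsto_bot hd0 (f.1 j)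
  have hZ := hclosed.mem_of_tendsto htt (Filter.Eventually.of_forall key)
  have hle2 : (fun i => if f.1 i < f.2 i then f.2 i else (⊥:Trop))
      ≤ (fun j => if f.2 j ≤ f.1 j then f.1 j else f.2 j) := by
    intro j
    by_cases hj : f.2 j ≤ f.1 j
    · simp only [if_neg (not_lt.2 hj)]; exact bot_le
    · simp only [if_pos (lt_of_not_ge hj), if_neg hj]; exact le_rfl
  have := hC.trans_mem _ hZ
    ((fun j => if f.2 j ≤ f.1 j then f.1 j else f.2 j),
     (fun i => if f.1 i < f.2 i then f.2 i else (⊥:Trop)))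
    (hC.monotone_mem _ hle2) rfl
  exact this


lemma le_tdot {n : ℕ} (x a : Fin n → Trop) (j : Fin n) : x j + a j ≤ tdot x a := by
  unfold tdot; exact Finset.le_sup (f := fun i => x i + a i) (Finset.mem_univ j)

lemma tdot_mono {n : ℕ} {x y : Fin n → Trop} (h : x ≤ y) (a : Fin n → Trop) :
    tdot x a ≤ tdot y a :=
  Finset.sup_mono_fun fun j _ => add_le_add_left (h j) (a j)

lemma vee_signed {n : ℕ} (x : (Fin n → Trop) × (Fin n → Trop)) : SignedVecPair (vee x) := by
  intro i
  by_cases hi : x.2 i ≤ x.1 i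
  · exact Or.inr (by simp [vee, not_lt.2 hi])
  · exact Or.inl (by simp [vee, hi])

/-- For a closed monotone pre-congruence C: (i) f ∈ C implies f^∨ ∈ C;
(ii) the one-sided polars of C and of its signed part coincide;
(iii) C = C^∨ ⊕ Δⁿ. -/
theorem closed_precongruence_signedPart {n : ℕ}
    (C : Set ((Fin n → Trop) × (Fin n → Trop)))
    (hC : IsMonotonePrecongruence C) (hclosed : IsClosed C) :
    (∀ f ∈ C, vee f ∈ C) ∧
    onePolar C = onePolar (signedPart C) ∧
    C = {h | ∃ g ∈ signedPart C, ∃ c : Fin n → Trop, h = (g.1 ⊔ c, g.2 ⊔ c)} := by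
  have hveemem := vee_mem C hC hclosed
  refine ⟨hveemem, ?_, ?_⟩
  · ext a
    simp only [onePolar, Set.mem_setOf_eq]
    constructor
    · intro ha x hx
      exact ha x hx.1
    · intro ha x hx
      have hv := ha (vee x) ⟨hveemem x hx, vee_signed x⟩
      refine Finset.sup_le fun j _ => ?_
      by_cases hj : x.2 j ≤ x.1 j
      · exact le_trans (add_le_add_left hj (a j)) (le_tdot x.1 a j)
      · have h1 : x.2 j + a j ≤ tdot (vee x).2 a := by
          have e : (vee x).2 j = x.2 j := if_pos (lt_of_not_ge hj)
          calc x.2 j + a j = (vee x).2 j + a j := by rw [e]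
            _ ≤ tdot (vee x).2 a := le_tdot (vee x).2 a j
        have h2 : tdot (vee x).1 a ≤ tdot x.1 a := by
          refine tdot_mono (fun i => ?_) a
          by_cases hi : x.2 i ≤ x.1 i
          · simp [vee, if_pos hi]
          · simp [vee, if_neg hi]
        exact le_trans h1 (le_trans hv h2)
  · ext h
    simp only [Set.mem_setOf_eq]
    constructor
    · intro hh
      refine ⟨vee h, ⟨hveemem h hh, vee_signed h⟩, (fun j => h.1 j ⊓ h.2 j), ?_⟩
      refine Prod.ext ?_ ?_
      · funext j
        by_cases hj : h.2 j ≤ h.1 j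
        · simp only [vee, Pi.sup_apply, if_pos hj]
          exact (sup_inf_self).symm
        · simp only [vee, Pi.sup_apply, if_neg hj, bot_sup_eq]
          exact (inf_eq_left.2 (le_of_not_ge hj)).symm
      · funext j
        by_cases hj : h.2 j ≤ h.1 j
        · simp only [vee, Pi.sup_apply, if_neg (not_lt.2 hj), bot_sup_eq]
          exact (inf_eq_right.2 hj).symm
        · simp only [vee, Pi.sup_apply, if_pos (lt_of_not_ge hj)]
          exact (sup_eq_left.2 inf_le_right).symm
    · rintro ⟨g, ⟨hg, -⟩, c, rfl⟩
      exact hC.add_mem g hg (c, c) (hC.monotone_mem (c, c) le_rfl)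
end

section
/- Let R ⊆ (𝕋ⁿ)² be a signed bend cone, let x = (x⁺,x⁻) ∈ R, and let y = (y⁺,y⁻) be a signed pair with y⁺ ≥ x⁺ and y⁻ ≤ x⁻ componentwise (equivalently, y ⪰ x coordinatewise for signed pairs). Then y ∈ R. -/
lemma vee_of_signed {n : ℕ} {f : (Fin n → Trop) × (Fin n → Trop)}
    (hf : SignedVecPair f) : vee f = f := by
  refine Prod.ext (funext fun i => ?_) (funext fun i => ?_)
  · by_cases h : f.2 i ≤ f.1 i
    · simp [vee, h]
    · rcases hf i with h1 | h2
      · simp [vee, h, h1]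
      · exact absurd (h2 ▸ bot_le) h
  · by_cases h : f.1 i < f.2 i
    · simp [vee, h]
    · rcases hf i with h1 | h2
      · push_neg at h
        have : f.2 i = ⊥ := le_bot_iff.mp (h.trans_eq h1)
        simp [vee, h, this]
      · simp [vee, h, h2]

lemma erase_neg {n : ℕ} {R : Set ((Fin n → Trop) × (Fin n → Trop))}
    (hR : IsSignedBendCone R) {f : (Fin n → Trop) × (Fin n → Trop)}
    (hf : f ∈ R) (i : Fin n) : (f.1, Function.update f.2 i ⊥) ∈ R := by
  set g : (Fin n → Trop) × (Fin n → Trop) :=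
    (Function.update (fun _ : Fin n => (⊥ : Trop)) i (f.2 i), fun _ : Fin n => (⊥ : Trop)) with hg
  have hgR : g ∈ R := hR.pos_mem _
  have key := hR.addI_vee_mem f hf g hgR i (by simp [hg])
  have heq : oplusI i f g = (f.1, Function.update f.2 i ⊥) := by
    refine Prod.ext (funext fun j => ?_) (funext fun j => ?_)
    · by_cases hj : j = i <;> simp [oplusI, hg, Function.update, hj]
    · by_cases hj : j = i <;> simp [oplusI, hg, Function.update, hj]
  rw [heq] at key
  rwa [vee_of_signed] at key
  intro j
  by_cases hj : j = i
  · subst hj; simp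
  · simpa [Function.update, hj] using hR.signed f hf j

lemma erase_neg_set {n : ℕ} {R : Set ((Fin n → Trop) × (Fin n → Trop))}
    (hR : IsSignedBendCone R) {f : (Fin n → Trop) × (Fin n → Trop)}
    (hf : f ∈ R) (S : Finset (Fin n)) :
    (f.1, fun j => if j ∈ S then (⊥ : Trop) else f.2 j) ∈ R := by
  induction S using Finset.induction_on with
  | empty => simpa using hf
  | @insert i S hi ih =>
      have key := erase_neg hR ih i
      have heq : (Function.update (fun j => if j ∈ S then (⊥ : Trop) else f.2 j) i ⊥)
          = fun j => if j ∈ insert i S then (⊥ : Trop) else f.2 j := by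
        funext j
        by_cases hj : j = i <;> simp [Function.update, hj]
      rwa [heq] at key

lemma only_neg {n : ℕ} {R : Set ((Fin n → Trop) × (Fin n → Trop))}
    (hR : IsSignedBendCone R) {f : (Fin n → Trop) × (Fin n → Trop)}
    (hf : f ∈ R) (i : Fin n) :
    (f.1, fun j => if j = i then f.2 j else (⊥ : Trop)) ∈ R := by
  have key := erase_neg_set hR hf ({i}ᶜ)
  have heq : (fun j => if j ∈ ({i}ᶜ : Finset (Fin n)) then (⊥ : Trop) else f.2 j)
      = fun j => if j = i then f.2 j else (⊥ : Trop) := by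
    funext j; by_cases hj : j = i <;> simp [hj]
  rwa [heq] at key

/-- A signed bend cone is upward closed among signed pairs: if x ∈ R and y is a
signed pair with y⁺ ≥ x⁺ and y⁻ ≤ x⁻ componentwise, then y ∈ R. -/
theorem signedBendCone_mem_of_ge {n : ℕ}
    (R : Set ((Fin n → Trop) × (Fin n → Trop))) (hR : IsSignedBendCone R)
    (x y : (Fin n → Trop) × (Fin n → Trop)) (hx : x ∈ R) (hy : SignedVecPair y)
    (h1 : x.1 ≤ y.1) (h2 : y.2 ≤ x.2) : y ∈ R := by
  have hsx := hR.signed x hx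
  -- mixed negative part membership, by induction on the set of replaced coordinates
  have main : ∀ S : Finset (Fin n),
      (x.1, fun j => if j ∈ S then y.2 j else x.2 j) ∈ R := by
    intro S
    induction S using Finset.induction_on with
    | empty => simpa using hx
    | @insert i S hi ih =>
        set z : Fin n → Trop := fun j => if j ∈ S then y.2 j else x.2 j with hz
        have hgoal_eq : ∀ w : Fin n → Trop,
            (∀ j, w j = if j ∈ insert i S then y.2 j else x.2 j) →
            (x.1, w) ∈ R → (x.1, fun j => if j ∈ insert i S then y.2 j else x.2 j) ∈ R := by
          intro w hw hmem
          have : w = fun j => if j ∈ insert i S then y.2 j else x.2 j := funext hw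
          rwa [this] at hmem
        by_cases hyi : y.2 i = ⊥
        · refine hgoal_eq (Function.update z i ⊥) ?_ (erase_neg hR ih i)
          intro j
          by_cases hj : j = i
          · subst hj; simp [Function.update, hyi]
          · simp [Function.update, hj, hz, Finset.mem_insert]
        · -- y.2 i = r, x.2 i = s with r ≤ s
          obtain ⟨r, hr⟩ : ∃ r : ℝ, y.2 i = (r : Trop) :=
            Option.ne_none_iff_exists'.mp hyi
          have hrx : (r : Trop) ≤ x.2 i := hr ▸ h2 i
          obtain ⟨s, hs⟩ : ∃ s : ℝ, x.2 i = (s : Trop) := by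
            have hne : x.2 i ≠ ⊥ := fun h => by simp [h] at hrx
            obtain ⟨s, hs⟩ := WithBot.ne_bot_iff_exists.mp hne
            exact ⟨s, hs.symm⟩
          have hrs : r ≤ s := by
            rw [hs] at hrx; exact_mod_cast hrx
          have hy1i : y.1 i = ⊥ := by
            rcases hy i with h | h
            · exact h
            · exact absurd h hyi
          have hx1i : x.1 i = ⊥ := le_bot_iff.mp (hy1i ▸ h1 i)
          set l : Trop := ((r - s : ℝ) : Trop) with hl
          -- g : element of R with negative part = y.2 i at coordinate i, ⊥ elsewhere
          have hxi := only_neg hR hx i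
          have hgmem := hR.smul_mem _ hxi l
          set g : (Fin n → Trop) × (Fin n → Trop) :=
            (tsmul l x.1, tsmul l fun j => if j = i then x.2 j else (⊥ : Trop)) with hgdef
          have hf1 := erase_neg hR ih i
          have hcond : Function.update z i (⊥ : Trop) i = g.1 i := by
            simp [Function.update, hgdef, tsmul, hx1i]
          have key := hR.addI_vee_mem _ hf1 g hgmem i hcond
          -- compute the resulting pair
          have hsmul_le : ∀ a : Trop, l + a ≤ a := by
            intro a
            induction a using WithBot.recBotCoe with
            | bot => simp
            | coe c =>
                rw [hl, ← WithBot.coe_add, WithBot.coe_le_coe]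
                linarith
          have heq : oplusI i (x.1, Function.update z i ⊥) g =
              (x.1, fun j => if j ∈ insert i S then y.2 j else x.2 j) := by
            refine Prod.ext (funext fun j => ?_) (funext fun j => ?_)
            · show x.1 j ⊔ Function.update g.1 i ⊥ j = x.1 j
              by_cases hj : j = i
              · subst hj; simp
              · rw [Function.update_of_ne hj]
                exact sup_eq_left.mpr (hsmul_le _)
            · show Function.update (Function.update z i ⊥) i ⊥ j ⊔ g.2 j =
                  if j ∈ insert i S then y.2 j else x.2 j
              by_cases hj : j = i
              · subst hj
                rw [Function.update_self, bot_sup_eq,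
                  if_pos (Finset.mem_insert_self j S), hr]
                show l + (if j = j then x.2 j else (⊥ : Trop)) = (r : Trop)
                rw [if_pos rfl, hs, hl, ← WithBot.coe_add]
                norm_num
              · rw [Function.update_of_ne hj, Function.update_of_ne hj]
                have : g.2 j = ⊥ := by simp [hgdef, tsmul, hj]
                rw [this, sup_bot_eq, hz]
                simp [Finset.mem_insert, hj]
          rw [heq] at key
          have hsigned : SignedVecPair
              (x.1, fun j => if j ∈ insert i S then y.2 j else x.2 j) := by
            intro j
            show x.1 j = ⊥ ∨ (if j ∈ insert i S then y.2 j else x.2 j) = ⊥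
            by_cases hj : j = i
            · subst hj; exact Or.inl hx1i
            · by_cases hjS : j ∈ S
              · simp only [Finset.mem_insert, hjS, or_true, if_pos]
                rcases hy j with h | h
                · exact Or.inl (le_bot_iff.mp (h ▸ h1 j))
                · exact Or.inr h
              · have hni : j ∉ insert i S := by simp [hj, hjS]
                rw [if_neg hni]
                exact hsx j
          rwa [vee_of_signed hsigned] at key
  have hxz := main Finset.univ
  have huniv : (fun j => if j ∈ (Finset.univ : Finset (Fin n)) then y.2 j else x.2 j) = y.2 := by
    funext j; simp
  rw [huniv] at hxz
  have key := hR.add_vee_mem _ hxz _ (hR.pos_mem y.1)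
  have heq : ((x.1, y.2).1 ⊔ (y.1, fun _ : Fin n => (⊥ : Trop)).1,
      (x.1, y.2).2 ⊔ (y.1, fun _ : Fin n => (⊥ : Trop)).2) = y := by
    refine Prod.ext ?_ ?_
    · simpa using sup_eq_right.mpr h1
    · simp
      exact fun i => bot_le
  rw [heq, vee_of_signed hy] at key
  exact key
end
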